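/- Let w : [0,1] → ℝ be continuous, not affine on [0,1/2] and not affine on [1/2,1] (i.e., there do not exist a, b ∈ ℝ with w(s) = a + b·s for all s ∈ [0,1/2], and likewise for [1/2,1]). For t ∈ [0,1] define D₂(t) := ∫₀^t (w(s) − (s/t)·w(t))² ds + ∫_t^1 (w(1) − w(s) − ((1−s)/(1−t))·(w(1) − w(t)))² ds, with the conventions s/t := 0 when t = 0 and (1−s)/(1−t) := 0 when t = 1. Then there exists c > 0 such that D₂(t) ≥ c for all t ∈ [0,1]. -/

import Mathlib

open Set MeasureTheory intervalIntegral


lemma quad_key_aux {f g : ℝ → ℝ} {u v B : ℝ} (huv : u ≤ v)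
    (hf : ContinuousOn f (Icc u v)) (hg : ContinuousOn g (Icc u v))
    (hC : (∫ s in u..v, g s ^ 2) = 1 / 24)
    (hB : B = ∫ s in u..v, f s * g s) (γ : ℝ) :
    (∫ s in u..v, (f s - 24 * B * g s) ^ 2)
      ≤ ∫ s in u..v, (f s - γ * g s) ^ 2 := by
  subst hB
  have hicc : uIcc u v = Icc u v := uIcc_of_le huv
  have hf2 : IntervalIntegrable (fun s => f s ^ 2) volume u v :=
    ((hf.pow 2).mono hicc.subset).intervalIntegrable
  have hfg : IntervalIntegrable (fun s => f s * g s) volume u v :=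
    ((hf.mul hg).mono hicc.subset).intervalIntegrable
  have hg2 : IntervalIntegrable (fun s => g s ^ 2) volume u v :=
    ((hg.pow 2).mono hicc.subset).intervalIntegrable
  have expand : ∀ c : ℝ, (∫ s in u..v, (f s - c * g s) ^ 2)
      = (∫ s in u..v, f s ^ 2) - 2 * c * (∫ s in u..v, f s * g s) + c ^ 2 * (1 / 24) := by
    intro c
    have h : (∫ s in u..v, (f s - c * g s) ^ 2)
        = ∫ s in u..v, (f s ^ 2 - 2 * c * (f s * g s) + c ^ 2 * g s ^ 2) :=
      intervalIntegral.integral_congr (fun s _ => by ring)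
    rw [h, integral_add ((hf2.sub (hfg.const_mul _))) (hg2.const_mul _),
      integral_sub hf2 (hfg.const_mul _), intervalIntegral.integral_const_mul, intervalIntegral.integral_const_mul, hC]
  rw [expand γ, expand (24 * ∫ s in u..v, f s * g s)]
  nlinarith [sq_nonneg (γ - 24 * ∫ s in u..v, f s * g s)]

lemma int_sq_pos {f : ℝ → ℝ} {u v : ℝ} (huv : u < v) (hf : ContinuousOn f (Icc u v))
    {s₀ : ℝ} (hs₀ : s₀ ∈ Icc u v) (hne : f s₀ ≠ 0) :
    0 < ∫ s in u..v, f s ^ 2 := by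
  have hpos : (0:ℝ) < f s₀ ^ 2 :=
    lt_of_le_of_ne (sq_nonneg _) (Ne.symm (pow_ne_zero 2 hne))
  have := intervalIntegral.integral_lt_integral_of_continuousOn_of_le_of_exists_lt
    (f := fun _ => (0:ℝ)) (g := fun s => f s ^ 2) huv continuousOn_const (hf.pow 2)
    (fun x _ => sq_nonneg _) ⟨s₀, hs₀, hpos⟩
  simpa using this



/-- The denominator of the integral-type self-normalized changepoint statistic, evaluated at
a continuous `w` that is not affine on `[0,1/2]` nor on `[1/2,1]`, is uniformly bounded away
from zero over `t ∈ [0,1]`.  (Lean's convention `x / 0 = 0` implements the conventions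
`s/t := 0` for `t = 0` and `(1-s)/(1-t) := 0` for `t = 1`.) -/
theorem stmt_3 (w : ℝ → ℝ) (hw : ContinuousOn w (Set.Icc 0 1))
    (h1 : ¬ ∃ a b : ℝ, ∀ s ∈ Set.Icc (0 : ℝ) (1/2), w s = a + b * s)
    (h2 : ¬ ∃ a b : ℝ, ∀ s ∈ Set.Icc (1/2 : ℝ) 1, w s = a + b * s) :
    ∃ c > 0, ∀ t ∈ Set.Icc (0 : ℝ) 1,
      c ≤ (∫ s in (0 : ℝ)..t, (w s - s / t * w t) ^ 2)
          + ∫ s in t..(1 : ℝ), (w 1 - w s - (1 - s) / (1 - t) * (w 1 - w t)) ^ 2 := by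
  push_neg at h1 h2
  -- basic continuity restrictions
  have hsubL : Icc (0:ℝ) (1/2) ⊆ Icc 0 1 := Icc_subset_Icc le_rfl (by norm_num)
  have hsubR : Icc (1/2:ℝ) 1 ⊆ Icc 0 1 := Icc_subset_Icc (by norm_num) le_rfl
  have hwL : ContinuousOn w (Icc (0:ℝ) (1/2)) := hw.mono hsubL
  have hwR : ContinuousOn w (Icc (1/2:ℝ) 1) := hw.mono hsubR
  -- the two key constants
  set B1 : ℝ := ∫ s in (0:ℝ)..(1/2), w s * s with hB1
  set B2 : ℝ := ∫ s in (1/2:ℝ)..1, (w 1 - w s) * (1 - s) with hB2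
  set c2 : ℝ := ∫ s in (0:ℝ)..(1/2), (w s - 24 * B1 * s) ^ 2 with hc2def
  set c1 : ℝ := ∫ s in (1/2:ℝ)..1, (w 1 - w s - 24 * B2 * (1 - s)) ^ 2 with hc1def
  have hCL : (∫ s in (0:ℝ)..(1/2), s ^ 2) = 1 / 24 := by
    rw [integral_pow]; norm_num
  have hCR : (∫ s in (1/2:ℝ)..1, (1 - s) ^ 2) = 1 / 24 := by
    have := intervalIntegral.integral_comp_sub_left (a := (1/2:ℝ)) (b := 1)
      (fun x : ℝ => x ^ 2) 1
    rw [this, integral_pow]; norm_num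
  have hgL : ContinuousOn (fun s : ℝ => s) (Icc (0:ℝ) (1/2)) := continuousOn_id
  have hgR : ContinuousOn (fun s : ℝ => 1 - s) (Icc (1/2:ℝ) 1) :=
    (continuous_const.sub continuous_id).continuousOn
  have hfR : ContinuousOn (fun s : ℝ => w 1 - w s) (Icc (1/2:ℝ) 1) :=
    continuousOn_const.sub hwR
  -- positivity of c2
  have hc2 : 0 < c2 := by
    obtain ⟨s₀, hs₀, hne⟩ := h1 0 (24 * B1)
    refine int_sq_pos (by norm_num) ?_ hs₀ ?_
    · exact hwL.sub ((continuous_const.mul continuous_id).continuousOn)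
    · intro h; exact hne (by linarith [sub_eq_zero.mp h])
  -- positivity of c1
  have hc1 : 0 < c1 := by
    obtain ⟨s₀, hs₀, hne⟩ := h2 (w 1 - 24 * B2) (24 * B2)
    refine int_sq_pos (by norm_num) ?_ hs₀ ?_
    · exact (continuousOn_const.sub hwR).sub
        ((continuous_const.mul (continuous_const.sub continuous_id)).continuousOn)
    · intro h
      apply hne
      have := sub_eq_zero.mp h
      linarith [this]
  refine ⟨min c1 c2, lt_min hc1 hc2, ?_⟩
  rintro t ⟨ht0, ht1⟩
  rcases le_total t (1/2) with hhalf | hhalf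
  · -- use the second integral, bounded below by c1
    have hI1 : 0 ≤ ∫ s in (0:ℝ)..t, (w s - s / t * w t) ^ 2 :=
      integral_nonneg ht0 (fun s _ => sq_nonneg _)
    have hGc : ContinuousOn
        (fun s => (w 1 - w s - (1 - s) / (1 - t) * (w 1 - w t)) ^ 2) (Icc (0:ℝ) 1) :=
      ((continuousOn_const.sub hw).sub
        (((continuous_const.sub continuous_id).div_const _).continuousOn.mul
          continuousOn_const)).pow 2
    have hIa : IntervalIntegrable
        (fun s => (w 1 - w s - (1 - s) / (1 - t) * (w 1 - w t)) ^ 2) volume t (1/2) :=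
      (hGc.mono (by rw [uIcc_of_le hhalf]; exact Icc_subset_Icc ht0 (by norm_num))).intervalIntegrable
    have hIb : IntervalIntegrable
        (fun s => (w 1 - w s - (1 - s) / (1 - t) * (w 1 - w t)) ^ 2) volume (1/2) 1 :=
      (hGc.mono (by rw [uIcc_of_le (by norm_num : (1/2:ℝ) ≤ 1)]; exact hsubR)).intervalIntegrable
    have hsplit := integral_add_adjacent_intervals hIa hIb
    have hnn1 : 0 ≤ ∫ s in t..(1/2:ℝ),
        (w 1 - w s - (1 - s) / (1 - t) * (w 1 - w t)) ^ 2 :=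
      integral_nonneg hhalf (fun s _ => sq_nonneg _)
    have hcong : (∫ s in (1/2:ℝ)..1, (w 1 - w s - (1 - s) / (1 - t) * (w 1 - w t)) ^ 2)
        = ∫ s in (1/2:ℝ)..1, ((w 1 - w s) - ((w 1 - w t) / (1 - t)) * (1 - s)) ^ 2 :=
      intervalIntegral.integral_congr (fun s _ => by ring)
    have hq : c1 ≤ ∫ s in (1/2:ℝ)..1,
        ((w 1 - w s) - ((w 1 - w t) / (1 - t)) * (1 - s)) ^ 2 := by
      have h := quad_key_aux (f := fun s => w 1 - w s) (g := fun s => 1 - s)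
        (by norm_num : (1/2:ℝ) ≤ 1) hfR hgR hCR hB2 ((w 1 - w t) / (1 - t))
      rw [hc1def]; exact h
    have : min c1 c2 ≤ ∫ s in t..(1:ℝ),
        (w 1 - w s - (1 - s) / (1 - t) * (w 1 - w t)) ^ 2 := by
      rw [← hsplit]
      calc min c1 c2 ≤ c1 := min_le_left _ _
        _ ≤ _ := by rw [← hcong] at hq; linarith
    linarith
  · -- use the first integral, bounded below by c2
    have hI2 : 0 ≤ ∫ s in t..(1:ℝ),
        (w 1 - w s - (1 - s) / (1 - t) * (w 1 - w t)) ^ 2 :=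
      integral_nonneg ht1 (fun s _ => sq_nonneg _)
    have hGc : ContinuousOn (fun s => (w s - s / t * w t) ^ 2) (Icc (0:ℝ) 1) :=
      (hw.sub ((continuous_id.div_const _).continuousOn.mul continuousOn_const)).pow 2
    have hIa : IntervalIntegrable (fun s => (w s - s / t * w t) ^ 2) volume 0 (1/2) :=
      (hGc.mono (by rw [uIcc_of_le (by norm_num : (0:ℝ) ≤ 1/2)]; exact hsubL)).intervalIntegrable
    have hIb : IntervalIntegrable (fun s => (w s - s / t * w t) ^ 2) volume (1/2) t :=
      (hGc.mono (by rw [uIcc_of_le hhalf]; exact Icc_subset_Icc (by norm_num) ht1)).intervalIntegrable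
    have hsplit := integral_add_adjacent_intervals hIa hIb
    have hnn1 : 0 ≤ ∫ s in (1/2:ℝ)..t, (w s - s / t * w t) ^ 2 :=
      integral_nonneg hhalf (fun s _ => sq_nonneg _)
    have hcong : (∫ s in (0:ℝ)..(1/2), (w s - s / t * w t) ^ 2)
        = ∫ s in (0:ℝ)..(1/2), (w s - (w t / t) * s) ^ 2 :=
      intervalIntegral.integral_congr (fun s _ => by ring)
    have hq : c2 ≤ ∫ s in (0:ℝ)..(1/2), (w s - (w t / t) * s) ^ 2 := by
      have h := quad_key_aux (f := w) (g := fun s : ℝ => s)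
        (by norm_num : (0:ℝ) ≤ 1/2) hwL hgL hCL hB1 (w t / t)
      rw [hc2def]; exact h
    have : min c1 c2 ≤ ∫ s in (0:ℝ)..t, (w s - s / t * w t) ^ 2 := by
      rw [← hsplit]
      calc min c1 c2 ≤ c2 := min_le_right _ _
        _ ≤ _ := by rw [← hcong] at hq; linarith
    linarith
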